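/- Let M ∈ ℂ^{n×d} be rank-one and let M̂ be the best rank-one approximation (in Frobenius norm) of M + Δ. Then the sine of the angle between the ranges of M and M̂, and likewise between the ranges of M* and M̂*, is bounded by max(‖P_{R(M)}Δ‖, ‖ΔP_{R(M*)}‖)/(‖M‖ − ‖M + Δ − M̂‖), provided the denominator is positive. -/

import Mathlib

open scoped Matrix

/-- Frobenius norm of a complex matrix. -/
noncomputable def frob {n d : ℕ} (M : Matrix (Fin n) (Fin d) ℂ) : ℝ :=
  Real.sqrt (∑ i, ∑ j, ‖M i j‖ ^ 2)

/-- Spectral norm of a complex matrix. -/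
noncomputable def specNorm {n d : ℕ} (M : Matrix (Fin n) (Fin d) ℂ) : ℝ :=
  ‖LinearMap.toContinuousLinearMap (Matrix.toEuclideanLin M)‖

/-- The orthogonal projection onto a subspace, as a map of the ambient space. -/
noncomputable def projCLM {n : ℕ} (S : Submodule ℂ (EuclideanSpace ℂ (Fin n))) :
    EuclideanSpace ℂ (Fin n) →L[ℂ] EuclideanSpace ℂ (Fin n) :=
  S.subtypeL.comp (S.orthogonalProjectionOnto)

/-- The orthogonal projection onto a subspace, as a matrix. -/
noncomputable def projMatrix {n : ℕ} (S : Submodule ℂ (EuclideanSpace ℂ (Fin n))) :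
    Matrix (Fin n) (Fin n) ℂ :=
  Matrix.toEuclideanLin.symm (projCLM S).toLinearMap

/-- `sin` of the angle between two subspaces: `sin θ(S, T) = ‖P_{S^⊥} P_T‖`. -/
noncomputable def sinTheta {n : ℕ} (S T : Submodule ℂ (EuclideanSpace ℂ (Fin n))) : ℝ :=
  ‖(projCLM Sᗮ).comp (projCLM T)‖

/-- Range (column space) of a matrix. -/
noncomputable def ran {n d : ℕ} (M : Matrix (Fin n) (Fin d) ℂ) :
    Submodule ℂ (EuclideanSpace ℂ (Fin n)) :=
  LinearMap.range (Matrix.toEuclideanLin M)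


open scoped InnerProductSpace ComplexConjugate

noncomputable section WedinAux

abbrev Eu (n : ℕ) := EuclideanSpace ℂ (Fin n)

/-- matrices to continuous linear maps, as a linear equiv -/
noncomputable def clmL (n d : ℕ) : Matrix (Fin n) (Fin d) ℂ ≃ₗ[ℂ] (Eu d →L[ℂ] Eu n) :=
  Matrix.toEuclideanLin.trans LinearMap.toContinuousLinearMap

noncomputable def clm {n d : ℕ} (M : Matrix (Fin n) (Fin d) ℂ) : Eu d →L[ℂ] Eu n := clmL n d M

variable {n d : ℕ}

lemma clm_apply (M : Matrix (Fin n) (Fin d) ℂ) (x : Eu d) :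
    clm M x = Matrix.toEuclideanLin M x := rfl

lemma clm_inj {A B : Matrix (Fin n) (Fin d) ℂ} (h : clm A = clm B) : A = B :=
  (clmL n d).injective h

lemma clm_mul {m : ℕ} (A : Matrix (Fin n) (Fin m) ℂ) (B : Matrix (Fin m) (Fin d) ℂ) :
    clm (A * B) = (clm A).comp (clm B) := by
  ext x
  simp [clm_apply, Matrix.toEuclideanLin_apply, Matrix.mulVec_mulVec]

lemma clm_zero : clm (0 : Matrix (Fin n) (Fin d) ℂ) = 0 := map_zero (clmL n d)

/-- rank-one operator  `x ↦ ⟪v, x⟫ • u` -/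
noncomputable def rk1 {n d : ℕ} (u : Eu n) (v : Eu d) : Eu d →L[ℂ] Eu n :=
  (ContinuousLinearMap.toSpanSingleton ℂ u).comp (innerSL ℂ v)

lemma rk1_apply (u : Eu n) (v : Eu d) (x : Eu d) : rk1 u v x = ⟪v, x⟫_ℂ • u := rfl

lemma norm_rk1 (u : Eu n) (v : Eu d) : ‖rk1 u v‖ = ‖u‖ * ‖v‖ := by
  refine le_antisymm ((ContinuousLinearMap.opNorm_comp_le _ _).trans ?_) ?_
  · rw [ContinuousLinearMap.norm_toSpanSingleton, innerSL_apply_norm]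
  · rcases eq_or_ne v 0 with rfl | hv
    · simp
    · have h := (rk1 u v).le_opNorm v
      have h3 : ‖(⟪v, v⟫_ℂ)‖ = ‖v‖ ^ 2 := by
        rw [inner_self_eq_norm_sq_to_K]
        simp [norm_pow]
      rw [rk1_apply, norm_smul, h3] at h
      have hv' : 0 < ‖v‖ := norm_pos_iff.mpr hv
      nlinarith [norm_nonneg (rk1 u v)]


lemma comp_rk1 {m : ℕ} (T : Eu n →L[ℂ] Eu m) (u : Eu n) (v : Eu d) :
    T.comp (rk1 u v) = rk1 (T u) v := by
  ext x
  simp [rk1_apply]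

lemma rk1_comp {m : ℕ} (u : Eu n) (v : Eu d) (T : Eu m →L[ℂ] Eu d) :
    (rk1 u v).comp T = rk1 u (ContinuousLinearMap.adjoint T v) := by
  ext x
  simp only [ContinuousLinearMap.coe_comp', Function.comp_apply, rk1_apply]
  rw [ContinuousLinearMap.adjoint_inner_left]

lemma rk1_comp_rk1 {m : ℕ} (u : Eu n) (v : Eu d) (w : Eu d) (z : Eu m) :
    (rk1 u v).comp (rk1 w z) = ⟪v, w⟫_ℂ • rk1 u z := by
  ext x
  simp only [ContinuousLinearMap.coe_comp', Function.comp_apply, rk1_apply,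
    inner_smul_right, ContinuousLinearMap.smul_apply, smul_eq_mul, mul_smul]
  rw [smul_comm]

lemma adjoint_rk1 (u : Eu n) (v : Eu d) :
    ContinuousLinearMap.adjoint (rk1 u v) = rk1 v u := by
  refine ContinuousLinearMap.ext fun x => ?_
  refine ext_inner_left ℂ fun w => ?_
  rw [ContinuousLinearMap.adjoint_inner_right, rk1_apply, rk1_apply, inner_smul_left,
    inner_smul_right, ← inner_conj_symm w v]
  ring

lemma rk1_smul_left (a : ℂ) (u : Eu n) (v : Eu d) : rk1 (a • u) v = a • rk1 u v := by
  ext x i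
  simp only [rk1_apply, PiLp.smul_apply, ContinuousLinearMap.smul_apply, smul_eq_mul]
  ring

lemma rk1_smul_right (a : ℂ) (u : Eu n) (v : Eu d) : rk1 u (a • v) = (starRingEnd ℂ a) • rk1 u v := by
  ext x i
  simp only [rk1_apply, inner_smul_left, PiLp.smul_apply, ContinuousLinearMap.smul_apply,
    smul_eq_mul]
  ring

lemma clm_conjTranspose (M : Matrix (Fin n) (Fin d) ℂ) :
    clm Mᴴ = ContinuousLinearMap.adjoint (clm M) := by
  unfold clm clmL
  simp only [LinearEquiv.trans_apply]
  rw [Matrix.toEuclideanLin_conjTranspose_eq_adjoint, LinearMap.adjoint_toContinuousLinearMap]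

lemma norm_clm_conjTranspose (M : Matrix (Fin n) (Fin d) ℂ) : ‖clm Mᴴ‖ = ‖clm M‖ := by
  rw [clm_conjTranspose]
  exact LinearIsometryEquiv.norm_map ContinuousLinearMap.adjoint (clm M)

lemma clm_vecMulVec (u : Eu n) (v : Eu d) :
    clm (Matrix.vecMulVec (fun i => u i) (fun j => conj (v j))) = rk1 u v := by
  ext x i
  simp only [clm_apply, Matrix.toEuclideanLin_apply, rk1_apply]
  show (Matrix.vecMulVec (fun i => u i) (fun j => conj (v j)) *ᵥ fun j => x j) i
      = (⟪v, x⟫_ℂ • u) i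
  simp only [Matrix.mulVec, Matrix.vecMulVec_apply, dotProduct, PiLp.smul_apply,
    PiLp.inner_apply, RCLike.inner_apply, smul_eq_mul, Finset.sum_mul, Finset.mul_sum]
  exact Finset.sum_congr rfl fun j _ => by ring


-- NOTE: these reference projCLM, sinTheta, ran, frob, specNorm which are defined above in real file;
-- for testing we inline the defs here (TESTDEFS marker)

lemma clm_projMatrix (S : Submodule ℂ (Eu n)) : clm (projMatrix S) = projCLM S := by
  refine ContinuousLinearMap.ext fun x => ?_
  show Matrix.toEuclideanLin (Matrix.toEuclideanLin.symm (projCLM S).toLinearMap) x = _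
  rw [LinearEquiv.apply_symm_apply]
  rfl

lemma specNorm_eq_norm_clm (M : Matrix (Fin n) (Fin d) ℂ) : specNorm M = ‖clm M‖ := rfl

lemma projCLM_apply (S : Submodule ℂ (Eu n)) (x : Eu n) :
    projCLM S x = (S.orthogonalProjectionOnto x : Eu n) := rfl

lemma projCLM_span_unit (u : Eu n) (hu : ‖u‖ = 1) : projCLM (ℂ ∙ u) = rk1 u u := by
  refine ContinuousLinearMap.ext fun x => ?_
  rw [projCLM_apply, ← Submodule.starProjection_apply, Submodule.starProjection_singleton ℂ, rk1_apply, hu]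
  norm_num

lemma norm_projCLM_apply_le (S : Submodule ℂ (Eu n)) (x : Eu n) : ‖projCLM S x‖ ≤ ‖x‖ := by
  rw [projCLM_apply]
  calc ‖(S.orthogonalProjectionOnto x : Eu n)‖ ≤ ‖S.orthogonalProjectionOnto‖ * ‖x‖ :=
        (S.orthogonalProjectionOnto).le_opNorm x
    _ ≤ 1 * ‖x‖ := by gcongr; exact Submodule.orthogonalProjectionOnto_norm_le S
    _ = ‖x‖ := one_mul _

lemma projCLM_orthogonal_apply (S : Submodule ℂ (Eu n)) (x : Eu n) :
    projCLM Sᗮ x = x - projCLM S x := by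
  rw [projCLM_apply, projCLM_apply, ← Submodule.starProjection_apply, ← Submodule.starProjection_apply,
    Submodule.starProjection_orthogonal_val]

lemma projCLM_bot : projCLM (⊥ : Submodule ℂ (Eu n)) = 0 := by
  refine ContinuousLinearMap.ext fun x => ?_
  rw [projCLM_apply, Submodule.orthogonalProjectionOnto_bot]
  rfl

lemma sinTheta_bot (S : Submodule ℂ (Eu n)) : sinTheta S (⊥ : Submodule ℂ (Eu n)) = 0 := by
  unfold sinTheta
  rw [projCLM_bot, ContinuousLinearMap.comp_zero, norm_zero]

lemma norm_sub_inner_smul_sq (u w : Eu n) (hu : ‖u‖ = 1) :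
    ‖w - ⟪u, w⟫_ℂ • u‖ ^ 2 = ‖w‖ ^ 2 - ‖⟪u, w⟫_ℂ‖ ^ 2 := by
  rw [norm_sub_sq (𝕜 := ℂ), inner_smul_right, norm_smul, hu]
  have h1 : ⟪w, u⟫_ℂ = conj ⟪u, w⟫_ℂ := by rw [inner_conj_symm]
  rw [h1, RCLike.mul_conj, ← RCLike.ofReal_pow, RCLike.ofReal_re]
  ring

lemma norm_sub_inner_smul_symm (u w : Eu n) (hu : ‖u‖ = 1) (hw : ‖w‖ = 1) :
    ‖w - ⟪u, w⟫_ℂ • u‖ = ‖u - ⟪w, u⟫_ℂ • w‖ := by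
  rw [← Real.sqrt_sq (norm_nonneg (w - ⟪u, w⟫_ℂ • u)),
    ← Real.sqrt_sq (norm_nonneg (u - ⟪w, u⟫_ℂ • w)),
    norm_sub_inner_smul_sq u w hu, norm_sub_inner_smul_sq w u hw, hu, hw]
  have h2 : ‖⟪w, u⟫_ℂ‖ = ‖⟪u, w⟫_ℂ‖ := by
    rw [← inner_conj_symm u w, RCLike.norm_conj]
  rw [h2]

lemma sinTheta_span_le (u uh : Eu n) (hu : ‖u‖ = 1) (huh : ‖uh‖ = 1) :
    sinTheta (ℂ ∙ u) (ℂ ∙ uh) = ‖u - ⟪uh, u⟫_ℂ • uh‖ := by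
  unfold sinTheta
  rw [projCLM_span_unit uh huh, comp_rk1, norm_rk1, huh, mul_one]
  have h : projCLM (ℂ ∙ u)ᗮ uh = uh - ⟪u, uh⟫_ℂ • u := by
    rw [projCLM_orthogonal_apply, projCLM_span_unit u hu, rk1_apply]
  rw [h, norm_sub_inner_smul_symm u uh hu huh]

lemma ran_eq_span (M : Matrix (Fin n) (Fin d) ℂ) (c : ℂ) (u : Eu n) (v : Eu d)
    (hc : c ≠ 0) (hv : v ≠ 0) (h : clm M = c • rk1 u v) : ran M = ℂ ∙ u := by
  have happ : ∀ x, Matrix.toEuclideanLin M x = (c * ⟪v, x⟫_ℂ) • u := by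
    intro x
    rw [← clm_apply, h]
    simp [rk1_apply, mul_smul]
  apply le_antisymm
  · rintro y ⟨x, rfl⟩
    rw [happ]
    exact Submodule.smul_mem _ _ (Submodule.mem_span_singleton_self u)
  · rw [Submodule.span_le, Set.singleton_subset_iff]
    have hvv : ⟪v, v⟫_ℂ ≠ 0 := by
      rw [inner_self_eq_norm_sq_to_K]
      simpa using norm_pos_iff.mpr hv |>.ne'
    have : Matrix.toEuclideanLin M ((c * ⟪v, v⟫_ℂ)⁻¹ • v) = u := by
      rw [map_smul, happ, smul_smul, inv_mul_cancel₀ (mul_ne_zero hc hvv), one_smul]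
    exact ⟨_, this⟩

lemma ran_bot : ran (0 : Matrix (Fin n) (Fin d) ℂ) = ⊥ := by
  unfold ran
  rw [map_zero, LinearMap.range_zero]

lemma clm_sub (A B : Matrix (Fin n) (Fin d) ℂ) : clm (A - B) = clm A - clm B :=
  map_sub (clmL n d) A B

lemma clm_add (A B : Matrix (Fin n) (Fin d) ℂ) : clm (A + B) = clm A + clm B :=
  map_add (clmL n d) A B

lemma frob_nonneg (B : Matrix (Fin n) (Fin d) ℂ) : 0 ≤ frob B := Real.sqrt_nonneg _

lemma frob_sq (B : Matrix (Fin n) (Fin d) ℂ) : frob B ^ 2 = ∑ i, ∑ j, ‖B i j‖ ^ 2 :=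
  Real.sq_sqrt (by positivity)

lemma eq_zero_of_frob_eq_zero {B : Matrix (Fin n) (Fin d) ℂ} (h : frob B = 0) : B = 0 := by
  have h2 : ∑ i, ∑ j, ‖B i j‖ ^ 2 = 0 := by
    rw [← frob_sq, h]; norm_num
  ext i j
  have hi : ∀ i ∈ Finset.univ, (∑ j, ‖B i j‖ ^ 2) = 0 :=
    (Finset.sum_eq_zero_iff_of_nonneg
      (fun i _ => Finset.sum_nonneg fun j _ => sq_nonneg _)).mp h2
  have hj : ∀ j ∈ Finset.univ, ‖B i j‖ ^ 2 = 0 :=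
    (Finset.sum_eq_zero_iff_of_nonneg (fun j _ => sq_nonneg _)).mp (hi i (Finset.mem_univ i))
  have h3 := hj j (Finset.mem_univ j)
  have hb : ‖B i j‖ = 0 := by nlinarith [norm_nonneg (B i j)]
  simpa using hb

lemma norm_sq_eu (x : Eu n) : ‖x‖ ^ 2 = ∑ i, ‖x i‖ ^ 2 := by
  rw [EuclideanSpace.norm_eq]
  exact Real.sq_sqrt (by positivity)

/-- the j-th column of B as a Euclidean vector -/
noncomputable def colv (B : Matrix (Fin n) (Fin d) ℂ) (j : Fin d) : Eu n :=
  clm B (EuclideanSpace.single j 1)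

lemma colv_apply (B : Matrix (Fin n) (Fin d) ℂ) (j : Fin d) (i : Fin n) :
    colv B j i = B i j := by
  show (B *ᵥ fun k => EuclideanSpace.single j (1:ℂ) k) i = B i j
  simp [Matrix.mulVec, dotProduct, EuclideanSpace.single_apply]

lemma frob_sq_eq_sum_colv (B : Matrix (Fin n) (Fin d) ℂ) :
    frob B ^ 2 = ∑ j, ‖colv B j‖ ^ 2 := by
  rw [frob_sq, Finset.sum_comm]
  exact Finset.sum_congr rfl fun j _ => by
    rw [norm_sq_eu]
    exact Finset.sum_congr rfl fun i _ => by rw [colv_apply]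

lemma frob_pyth_col (Q : Matrix (Fin n) (Fin n) ℂ) (hherm : Qᴴ = Q) (hidem : Q * Q = Q)
    (B : Matrix (Fin n) (Fin d) ℂ) :
    frob B ^ 2 = frob (Q * B) ^ 2 + frob (B - Q * B) ^ 2 := by
  have hsa : ∀ (x y : Eu n), ⟪clm Q x, y⟫_ℂ = ⟪x, clm Q y⟫_ℂ := by
    intro x y
    rw [show clm Q y = ContinuousLinearMap.adjoint (clm Q) y by
      rw [← clm_conjTranspose, hherm]]
    rw [ContinuousLinearMap.adjoint_inner_right]
  rw [frob_sq_eq_sum_colv B, frob_sq_eq_sum_colv, frob_sq_eq_sum_colv,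
    ← Finset.sum_add_distrib]
  refine Finset.sum_congr rfl fun j _ => ?_
  have hcolQ : colv (Q * B) j = clm Q (colv B j) := by
    unfold colv; rw [clm_mul]; rfl
  have hcolS : colv (B - Q * B) j = colv B j - colv (Q * B) j := by
    unfold colv; rw [clm_sub]; rfl
  set b := colv B j with hb
  have hqq : clm Q (clm Q b) = clm Q b := by
    rw [← ContinuousLinearMap.comp_apply, ← clm_mul, hidem]
  have horth : ⟪clm Q b, b - clm Q b⟫_ℂ = 0 := by
    rw [hsa, map_sub, hqq, sub_self, inner_zero_right]
  have hdecomp : b = clm Q b + (b - clm Q b) := by abel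
  rw [hcolS, hcolQ]
  calc ‖b‖ ^ 2 = ‖clm Q b + (b - clm Q b)‖ ^ 2 := by rw [← hdecomp]
    _ = ‖clm Q b‖ ^ 2 + 2 * RCLike.re ⟪clm Q b, b - clm Q b⟫_ℂ + ‖b - clm Q b‖ ^ 2 := by
        exact norm_add_sq (𝕜 := ℂ) _ _
    _ = ‖clm Q b‖ ^ 2 + ‖b - clm Q b‖ ^ 2 := by rw [horth]; norm_num

lemma frob_conjTranspose (B : Matrix (Fin n) (Fin d) ℂ) : frob Bᴴ = frob B := by
  unfold frob
  rw [Finset.sum_comm]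
  congr 1
  refine Finset.sum_congr rfl fun i _ => Finset.sum_congr rfl fun j _ => ?_
  rw [Matrix.conjTranspose_apply, norm_star]

lemma frob_pyth_row (P : Matrix (Fin d) (Fin d) ℂ) (hherm : Pᴴ = P) (hidem : P * P = P)
    (B : Matrix (Fin n) (Fin d) ℂ) :
    frob B ^ 2 = frob (B * P) ^ 2 + frob (B - B * P) ^ 2 := by
  have h1 : (B * P)ᴴ = P * Bᴴ := by rw [Matrix.conjTranspose_mul, hherm]
  have h2 : (B - B * P)ᴴ = Bᴴ - P * Bᴴ := by rw [Matrix.conjTranspose_sub, h1]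
  rw [← frob_conjTranspose B, ← frob_conjTranspose (B * P), ← frob_conjTranspose (B - B * P),
    h1, h2]
  exact frob_pyth_col P hherm hidem Bᴴ

lemma vecMulVec_mul {m : ℕ} (u : Fin n → ℂ) (w : Fin d → ℂ) (A : Matrix (Fin d) (Fin m) ℂ) :
    Matrix.vecMulVec u w * A = Matrix.vecMulVec u (w ᵥ* A) := by
  ext i j
  simp only [Matrix.mul_apply, Matrix.vecMulVec_apply, Matrix.vecMul, dotProduct,
    Finset.mul_sum]
  exact Finset.sum_congr rfl fun k _ => by ring

lemma mul_vecMulVec {m : ℕ} (A : Matrix (Fin n) (Fin d) ℂ) (w : Fin d → ℂ) (z : Fin m → ℂ) :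
    A * Matrix.vecMulVec w z = Matrix.vecMulVec (A *ᵥ w) z := by
  ext i j
  simp only [Matrix.mul_apply, Matrix.vecMulVec_apply, Matrix.mulVec, dotProduct,
    Finset.sum_mul]
  exact Finset.sum_congr rfl fun k _ => by ring

lemma rank_vecMulVec_le (u : Fin n → ℂ) (w : Fin d → ℂ) :
    (Matrix.vecMulVec u w).rank ≤ 1 := by
  classical
  have hr : LinearMap.range (Matrix.vecMulVec u w).mulVecLin ≤ ℂ ∙ u := by
    rintro y ⟨x, rfl⟩
    have hx : Matrix.vecMulVec u w *ᵥ x = (w ⬝ᵥ x) • u := by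
      funext i
      simp only [Matrix.mulVec, Matrix.vecMulVec_apply, dotProduct, Pi.smul_apply,
        smul_eq_mul, Finset.sum_mul]
      exact Finset.sum_congr rfl fun k _ => by ring
    rw [Matrix.mulVecLin_apply, hx]
    exact Submodule.smul_mem _ _ (Submodule.mem_span_singleton_self u)
  have h1 : (Matrix.vecMulVec u w).rank ≤ Module.finrank ℂ (ℂ ∙ u) :=
    Submodule.finrank_mono hr
  refine h1.trans ?_
  rcases eq_or_ne u 0 with rfl | hu
  · rw [Submodule.span_zero_singleton]
    simp
  · rw [finrank_span_singleton hu]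

lemma rank_le_one_decomp {M : Matrix (Fin n) (Fin d) ℂ} (h : M.rank ≤ 1) :
    ∃ (x : Fin n → ℂ) (w : Fin d → ℂ), M = Matrix.vecMulVec x w := by
  classical
  have hp : (LinearMap.range M.mulVecLin).IsPrincipal := by
    rw [← Submodule.finrank_le_one_iff_isPrincipal]
    exact h
  obtain ⟨x, hx⟩ := hp.principal
  have hcol : ∀ j, ∃ c : ℂ, M *ᵥ Pi.single j 1 = c • x := by
    intro j
    have hmem : M *ᵥ Pi.single j 1 ∈ LinearMap.range M.mulVecLin := ⟨Pi.single j 1, rfl⟩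
    rw [hx] at hmem
    obtain ⟨c, hc⟩ := Submodule.mem_span_singleton.mp hmem
    exact ⟨c, hc.symm⟩
  choose w hw using hcol
  refine ⟨x, w, ?_⟩
  ext i j
  have hwj := congrFun (hw j) i
  rw [Matrix.mulVec_single_one] at hwj
  simp only [Pi.smul_apply, smul_eq_mul, mul_one, Matrix.col_apply] at hwj
  rw [Matrix.vecMulVec_apply, hwj, mul_comm]

lemma unit_of_norm {u : Eu n} (hu : u ≠ 0) : ‖((‖u‖ : ℂ)⁻¹ • u)‖ = 1 := by
  have h := norm_ne_zero_iff.mpr hu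
  rw [norm_smul, norm_inv]
  simp only [Complex.norm_real, abs_norm, norm_norm]
  field_simp

lemma decomp_unit {M : Matrix (Fin n) (Fin d) ℂ} (hr : M.rank ≤ 1) (hM : M ≠ 0) :
    ∃ (c : ℝ) (u : Eu n) (v : Eu d), 0 < c ∧ ‖u‖ = 1 ∧ ‖v‖ = 1 ∧
      clm M = (c : ℂ) • rk1 u v := by
  obtain ⟨x, w, rfl⟩ := rank_le_one_decomp hr
  set u0 : Eu n := (WithLp.equiv 2 (Fin n → ℂ)).symm x with hu0
  set v0 : Eu d := (WithLp.equiv 2 (Fin d → ℂ)).symm (star w) with hv0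
  have hx : x ≠ 0 := by
    rintro rfl
    apply hM
    ext i j
    simp [Matrix.vecMulVec_apply]
  have hw : w ≠ 0 := by
    rintro rfl
    apply hM
    ext i j
    simp [Matrix.vecMulVec_apply]
  have hu0ne : u0 ≠ 0 := by
    intro h
    apply hx
    have h2 : (WithLp.equiv 2 (Fin n → ℂ)) u0 = (WithLp.equiv 2 (Fin n → ℂ)) 0 := congrArg _ h
    simpa [hu0] using h2
  have hv0ne : v0 ≠ 0 := by
    intro h
    apply hw
    have h2 : (WithLp.equiv 2 (Fin d → ℂ)) v0 = (WithLp.equiv 2 (Fin d → ℂ)) 0 := congrArg _ h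
    simp only [hv0, WithLp.equiv_symm_apply] at h2
    have h3 : star w = (0 : Fin d → ℂ) := by simpa using h2
    have h4 := congrArg star h3
    simpa using h4
  have hM0 : clm (Matrix.vecMulVec x w) = rk1 u0 v0 := by
    have h1 : (fun i => u0 i) = x := rfl
    have h2 : (fun j => (starRingEnd ℂ) (v0 j)) = w := by
      funext j
      simp [hv0, WithLp.equiv_symm_apply, Pi.star_apply, RCLike.star_def]
    rw [← h1, ← h2, clm_vecMulVec]
  refine ⟨‖u0‖ * ‖v0‖, (‖u0‖ : ℂ)⁻¹ • u0, (‖v0‖ : ℂ)⁻¹ • v0,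
    mul_pos (norm_pos_iff.mpr hu0ne) (norm_pos_iff.mpr hv0ne),
    unit_of_norm hu0ne, unit_of_norm hv0ne, ?_⟩
  rw [hM0, rk1_smul_left, rk1_smul_right, smul_smul, smul_smul]
  have hcc : (((‖u0‖ * ‖v0‖ : ℝ) : ℂ) * (‖u0‖ : ℂ)⁻¹ * (starRingEnd ℂ) ((‖v0‖ : ℂ)⁻¹)) = 1 := by
    rw [map_inv₀, Complex.conj_ofReal]
    have h5 : (‖u0‖ : ℂ) ≠ 0 := by
      simpa using norm_ne_zero_iff.mpr hu0ne
    have h6 : (‖v0‖ : ℂ) ≠ 0 := by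
      simpa using norm_ne_zero_iff.mpr hv0ne
    push_cast
    field_simp
  rw [hcc, one_smul]

lemma final_arith {s1 s2 c ee NN : ℝ} (h1 : c * s1 ≤ ee * s2 + NN)
    (h2 : c * s2 ≤ ee * s1 + NN) (hee0 : 0 ≤ ee) (hs1 : 0 ≤ s1) (hs2 : 0 ≤ s2) :
    max s1 s2 * (c - ee) ≤ NN := by
  rcases le_total s1 s2 with h | h
  · rw [max_eq_right h]
    have hmul : ee * s1 ≤ ee * s2 := mul_le_mul_of_nonneg_left h hee0
    nlinarith
  · rw [max_eq_left h]
    have hmul : ee * s2 ≤ ee * s1 := mul_le_mul_of_nonneg_left h hee0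
    nlinarith

end WedinAux

set_option maxHeartbeats 2000000 in
/-- Wedin's non-Hermitian `sin θ` theorem, rank-one case: if `M` is rank-one and `M̂` is
a best rank-one Frobenius approximation of `M + Δ`, then the sines of the angles between
the ranges of `M, M̂` and of `M*, M̂*` are bounded by
`max(‖P_{R(M)}Δ‖, ‖ΔP_{R(M*)}‖)/(‖M‖ − ‖M + Δ − M̂‖)`, provided the denominator is
positive. -/
theorem wedin_sin_theta_rank_one {n d : ℕ} (M Mhat Δ : Matrix (Fin n) (Fin d) ℂ)
    (hM : M.rank = 1) (hMhat : Mhat.rank ≤ 1)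
    (hbest : ∀ Z : Matrix (Fin n) (Fin d) ℂ, Z.rank ≤ 1 →
      frob (M + Δ - Mhat) ≤ frob (M + Δ - Z))
    (hden : 0 < specNorm M - specNorm (M + Δ - Mhat)) :
    max (sinTheta (ran M) (ran Mhat)) (sinTheta (ran Mᴴ) (ran Mhatᴴ))
      ≤ max (specNorm (projMatrix (ran M) * Δ)) (specNorm (Δ * projMatrix (ran Mᴴ)))
        / (specNorm M - specNorm (M + Δ - Mhat)) := by
  classical
  have hMne : M ≠ 0 := by
    intro h
    rw [h, Matrix.rank_zero] at hM
    norm_num at hM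
  obtain ⟨c, u, v, hc, hu, hv, hMclm⟩ := decomp_unit (le_of_eq hM) hMne
  have hune : u ≠ 0 := by
    intro h; rw [h, norm_zero] at hu; norm_num at hu
  have hvne : v ≠ 0 := by
    intro h; rw [h, norm_zero] at hv; norm_num at hv
  have hcC : (c : ℂ) ≠ 0 := by exact_mod_cast hc.ne'
  have hinneru : ⟪u, u⟫_ℂ = 1 := by
    rw [inner_self_eq_norm_sq_to_K, hu]; norm_num
  have hinnerv : ⟪v, v⟫_ℂ = 1 := by
    rw [inner_self_eq_norm_sq_to_K, hv]; norm_num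
  have hσ : specNorm M = c := by
    rw [specNorm_eq_norm_clm, hMclm, norm_smul ((c:ℂ)) (rk1 u v), norm_rk1, hu, hv,
      Complex.norm_real]
    rw [Real.norm_eq_abs, abs_of_pos hc]
    ring
  have hMHclm : clm Mᴴ = (c : ℂ) • rk1 v u := by
    rw [clm_conjTranspose, hMclm, map_smulₛₗ, adjoint_rk1]
    rw [starRingEnd_apply, RCLike.star_def, Complex.conj_ofReal]
  have hranM : ran M = ℂ ∙ u := ran_eq_span M _ u v hcC hvne hMclm
  have hranMH : ran Mᴴ = ℂ ∙ v := ran_eq_span Mᴴ _ v u hcC hune hMHclm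
  set NN := max (specNorm (projMatrix (ran M) * Δ)) (specNorm (Δ * projMatrix (ran Mᴴ)))
    with hNN
  have hNN0 : 0 ≤ NN := by
    have h1 : (0:ℝ) ≤ specNorm (projMatrix (ran M) * Δ) := by
      rw [specNorm_eq_norm_clm]; exact norm_nonneg _
    exact h1.trans (le_max_left _ _)
  set ee := specNorm (M + Δ - Mhat) with hee
  have hee0 : 0 ≤ ee := by
    rw [hee, specNorm_eq_norm_clm]; exact norm_nonneg _
  rcases eq_or_ne Mhat 0 with rfl | hMhne
  · rw [ran_bot, Matrix.conjTranspose_zero, ran_bot, sinTheta_bot, sinTheta_bot]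
    rw [max_self]
    exact div_nonneg hNN0 hden.le
  obtain ⟨ch, uh, vh, hch, huh, hvh, hMhclm⟩ := decomp_unit hMhat hMhne
  have huhne : uh ≠ 0 := by
    intro h; rw [h, norm_zero] at huh; norm_num at huh
  have hvhne : vh ≠ 0 := by
    intro h; rw [h, norm_zero] at hvh; norm_num at hvh
  have hchC : (ch : ℂ) ≠ 0 := by exact_mod_cast hch.ne'
  have hinneruh : ⟪uh, uh⟫_ℂ = 1 := by
    rw [inner_self_eq_norm_sq_to_K, huh]; norm_num
  have hinnervh : ⟪vh, vh⟫_ℂ = 1 := by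
    rw [inner_self_eq_norm_sq_to_K, hvh]; norm_num
  have hMhHclm : clm Mhatᴴ = (ch : ℂ) • rk1 vh uh := by
    rw [clm_conjTranspose, hMhclm, map_smulₛₗ, adjoint_rk1]
    rw [starRingEnd_apply, RCLike.star_def, Complex.conj_ofReal]
  have hranMhat : ran Mhat = ℂ ∙ uh := ran_eq_span Mhat _ uh vh hchC hvhne hMhclm
  have hranMhatH : ran Mhatᴴ = ℂ ∙ vh := ran_eq_span Mhatᴴ _ vh uh hchC huhne hMhHclm
  -- the two rank-one projection matrices
  set Qh : Matrix (Fin n) (Fin n) ℂ :=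
    Matrix.vecMulVec (fun i => uh i) (fun j => conj (uh j)) with hQh
  set Ph : Matrix (Fin d) (Fin d) ℂ :=
    Matrix.vecMulVec (fun i => vh i) (fun j => conj (vh j)) with hPh
  have hQclm : clm Qh = rk1 uh uh := clm_vecMulVec uh uh
  have hPclm : clm Ph = rk1 vh vh := clm_vecMulVec vh vh
  have hQherm : Qhᴴ = Qh := by
    ext i j
    simp only [hQh, Matrix.conjTranspose_apply, Matrix.vecMulVec_apply, RCLike.star_def,
      map_mul, Complex.conj_conj]
    ring
  have hPherm : Phᴴ = Ph := by
    ext i j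
    simp only [hPh, Matrix.conjTranspose_apply, Matrix.vecMulVec_apply, RCLike.star_def,
      map_mul, Complex.conj_conj]
    ring
  have hQidem : Qh * Qh = Qh := by
    apply clm_inj
    rw [clm_mul, hQclm, rk1_comp_rk1, hinneruh, one_smul]
  have hPidem : Ph * Ph = Ph := by
    apply clm_inj
    rw [clm_mul, hPclm, rk1_comp_rk1, hinnervh, one_smul]
  have hfixP : Mhat * Ph = Mhat := by
    apply clm_inj
    rw [clm_mul, hMhclm, hPclm, ContinuousLinearMap.smul_comp, rk1_comp_rk1, hinnervh,
      one_smul]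
  have hfixQ : Qh * Mhat = Mhat := by
    apply clm_inj
    rw [clm_mul, hMhclm, hQclm, ContinuousLinearMap.comp_smul, rk1_comp_rk1, hinneruh,
      one_smul]
  -- first-order optimality conditions
  have hEP : (M + Δ - Mhat) * Ph = 0 := by
    have hrank : ((M + Δ) * Ph).rank ≤ 1 := by
      rw [hPh, mul_vecMulVec]
      exact rank_vecMulVec_le _ _
    have hkey := hbest ((M + Δ) * Ph) hrank
    have hpy := frob_pyth_row Ph hPherm hPidem (M + Δ - Mhat)
    have hrw : (M + Δ - Mhat) - (M + Δ - Mhat) * Ph = (M + Δ) - (M + Δ) * Ph := by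
      rw [Matrix.sub_mul, hfixP]
      abel
    rw [hrw] at hpy
    have h2 : frob (M + Δ - Mhat) ^ 2 ≤ frob ((M + Δ) - (M + Δ) * Ph) ^ 2 :=
      pow_le_pow_left₀ (frob_nonneg _) hkey 2
    have h4 : frob ((M + Δ - Mhat) * Ph) ^ 2 ≤ 0 := by linarith
    have h3 : frob ((M + Δ - Mhat) * Ph) = 0 :=
      pow_eq_zero_iff two_ne_zero |>.mp (le_antisymm h4 (sq_nonneg _))
    exact eq_zero_of_frob_eq_zero h3
  have hQE : Qh * (M + Δ - Mhat) = 0 := by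
    have hrank : (Qh * (M + Δ)).rank ≤ 1 := by
      rw [hQh, vecMulVec_mul]
      exact rank_vecMulVec_le _ _
    have hkey := hbest (Qh * (M + Δ)) hrank
    have hpy := frob_pyth_col Qh hQherm hQidem (M + Δ - Mhat)
    have hrw : (M + Δ - Mhat) - Qh * (M + Δ - Mhat) = (M + Δ) - Qh * (M + Δ) := by
      rw [Matrix.mul_sub, hfixQ]
      abel
    rw [hrw] at hpy
    have h2 : frob (M + Δ - Mhat) ^ 2 ≤ frob ((M + Δ) - Qh * (M + Δ)) ^ 2 :=
      pow_le_pow_left₀ (frob_nonneg _) hkey 2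
    have h4 : frob (Qh * (M + Δ - Mhat)) ^ 2 ≤ 0 := by linarith
    have h3 : frob (Qh * (M + Δ - Mhat)) = 0 :=
      pow_eq_zero_iff two_ne_zero |>.mp (le_antisymm h4 (sq_nonneg _))
    exact eq_zero_of_frob_eq_zero h3
  -- operator-level consequences
  have hep : ∀ x, clm (M + Δ - Mhat) (rk1 vh vh x) = 0 := by
    intro x
    have h0 : clm ((M + Δ - Mhat) * Ph) = 0 := by rw [hEP, clm_zero]
    rw [clm_mul, hPclm] at h0
    have := ContinuousLinearMap.ext_iff.mp h0 x
    simpa using this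
  have hqe : ∀ x, rk1 uh uh (clm (M + Δ - Mhat) x) = 0 := by
    intro x
    have h0 : clm (Qh * (M + Δ - Mhat)) = 0 := by rw [hQE, clm_zero]
    rw [clm_mul, hQclm] at h0
    have := ContinuousLinearMap.ext_iff.mp h0 x
    simpa using this
  have hE'Q : (M + Δ - Mhat)ᴴ * Qh = 0 := by
    have h0 := congrArg Matrix.conjTranspose hQE
    rwa [Matrix.conjTranspose_mul, hQherm, Matrix.conjTranspose_zero] at h0
  have hPE' : Ph * (M + Δ - Mhat)ᴴ = 0 := by
    have h0 := congrArg Matrix.conjTranspose hEP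
    rwa [Matrix.conjTranspose_mul, hPherm, Matrix.conjTranspose_zero] at h0
  have hep' : ∀ x, clm ((M + Δ - Mhat)ᴴ) (rk1 uh uh x) = 0 := by
    intro x
    have h0 : clm ((M + Δ - Mhat)ᴴ * Qh) = 0 := by rw [hE'Q, clm_zero]
    rw [clm_mul, hQclm] at h0
    have := ContinuousLinearMap.ext_iff.mp h0 x
    simpa using this
  have hqe' : ∀ x, rk1 vh vh (clm ((M + Δ - Mhat)ᴴ) x) = 0 := by
    intro x
    have h0 : clm (Ph * (M + Δ - Mhat)ᴴ) = 0 := by rw [hPE', clm_zero]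
    rw [clm_mul, hPclm] at h0
    have := ContinuousLinearMap.ext_iff.mp h0 x
    simpa using this
  have heapp : ∀ x, clm (M + Δ - Mhat) x = clm M x + clm Δ x - clm Mhat x := by
    intro x
    rw [clm_sub, clm_add]
    simp
  have heapp' : ∀ x, clm ((M + Δ - Mhat)ᴴ) x = clm Mᴴ x + clm Δᴴ x - clm Mhatᴴ x := by
    intro x
    rw [Matrix.conjTranspose_sub, Matrix.conjTranspose_add, clm_sub, clm_add]
    simp
  have heenorm : ee = ‖clm (M + Δ - Mhat)‖ := by rw [hee, specNorm_eq_norm_clm]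
  have heenorm' : ‖clm ((M + Δ - Mhat)ᴴ)‖ = ee := by
    rw [norm_clm_conjTranspose, heenorm]
  -- numerator bounds
  have hN2 : ‖clm Δ v‖ ≤ NN := by
    have h1 : clm (Δ * projMatrix (ran Mᴴ)) = rk1 (clm Δ v) v := by
      rw [clm_mul, clm_projMatrix, hranMH, projCLM_span_unit v hv, comp_rk1]
    have h2 : specNorm (Δ * projMatrix (ran Mᴴ)) = ‖clm Δ v‖ := by
      rw [specNorm_eq_norm_clm, h1, norm_rk1, hv, mul_one]
    rw [hNN, ← h2]
    exact le_max_right _ _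
  have hN1 : ‖clm Δᴴ u‖ ≤ NN := by
    have h1 : clm (projMatrix (ran M) * Δ) = rk1 u (clm Δᴴ u) := by
      rw [clm_mul, clm_projMatrix, hranM, projCLM_span_unit u hu, rk1_comp,
        ← clm_conjTranspose]
    have h2 : specNorm (projMatrix (ran M) * Δ) = ‖clm Δᴴ u‖ := by
      rw [specNorm_eq_norm_clm, h1, norm_rk1, hu, one_mul]
    rw [hNN, ← h2]
    exact le_max_left _ _
  -- key vector identities
  have hmv : clm M v = (c : ℂ) • u := by
    rw [hMclm]
    simp only [ContinuousLinearMap.smul_apply, rk1_apply, hinnerv, one_smul]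
  have hm'u : clm Mᴴ u = (c : ℂ) • v := by
    rw [hMHclm]
    simp only [ContinuousLinearMap.smul_apply, rk1_apply, hinneru, one_smul]
  have hfixmh : rk1 uh uh (clm Mhat v) = clm Mhat v := by
    rw [hMhclm]
    simp only [ContinuousLinearMap.smul_apply, rk1_apply, map_smul, inner_smul_right,
      hinneruh, one_smul, mul_smul]
  have hfixmh' : rk1 vh vh (clm Mhatᴴ u) = clm Mhatᴴ u := by
    rw [hMhHclm]
    simp only [ContinuousLinearMap.smul_apply, rk1_apply, map_smul, inner_smul_right,
      hinnervh, one_smul, mul_smul]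
  have hid1 : (c : ℂ) • (u - rk1 uh uh u) =
      clm (M + Δ - Mhat) (v - rk1 vh vh v) - (clm Δ v - rk1 uh uh (clm Δ v)) := by
    have h1 : clm (M + Δ - Mhat) (v - rk1 vh vh v) = clm (M + Δ - Mhat) v := by
      rw [map_sub, hep v, sub_zero]
    have h4 : (0 : Eu n) = rk1 uh uh (clm M v) + rk1 uh uh (clm Δ v) - clm Mhat v := by
      rw [← hqe v, heapp v, map_sub, map_add, hfixmh]
    have h6 : rk1 uh uh (clm M v) = clm Mhat v - rk1 uh uh (clm Δ v) := by
      have h7 : rk1 uh uh (clm M v) + rk1 uh uh (clm Δ v) = clm Mhat v := by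
        have h8 := h4.symm
        rwa [sub_eq_zero] at h8
      exact eq_sub_of_add_eq h7
    calc (c : ℂ) • (u - rk1 uh uh u)
        = clm M v - rk1 uh uh (clm M v) := by
          rw [smul_sub, ← map_smul, ← hmv]
      _ = clm (M + Δ - Mhat) v - (clm Δ v - rk1 uh uh (clm Δ v)) := by
          rw [h6, heapp v]
          abel
      _ = clm (M + Δ - Mhat) (v - rk1 vh vh v) - (clm Δ v - rk1 uh uh (clm Δ v)) := by
          rw [h1]
  have hid2 : (c : ℂ) • (v - rk1 vh vh v) =
      clm ((M + Δ - Mhat)ᴴ) (u - rk1 uh uh u) - (clm Δᴴ u - rk1 vh vh (clm Δᴴ u)) := by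
    have h1 : clm ((M + Δ - Mhat)ᴴ) (u - rk1 uh uh u) = clm ((M + Δ - Mhat)ᴴ) u := by
      rw [map_sub, hep' u, sub_zero]
    have h4 : (0 : Eu d) = rk1 vh vh (clm Mᴴ u) + rk1 vh vh (clm Δᴴ u) - clm Mhatᴴ u := by
      rw [← hqe' u, heapp' u, map_sub, map_add, hfixmh']
    have h6 : rk1 vh vh (clm Mᴴ u) = clm Mhatᴴ u - rk1 vh vh (clm Δᴴ u) := by
      have h7 : rk1 vh vh (clm Mᴴ u) + rk1 vh vh (clm Δᴴ u) = clm Mhatᴴ u := by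
        have h8 := h4.symm
        rwa [sub_eq_zero] at h8
      exact eq_sub_of_add_eq h7
    calc (c : ℂ) • (v - rk1 vh vh v)
        = clm Mᴴ u - rk1 vh vh (clm Mᴴ u) := by
          rw [smul_sub, ← map_smul, ← hm'u]
      _ = clm ((M + Δ - Mhat)ᴴ) u - (clm Δᴴ u - rk1 vh vh (clm Δᴴ u)) := by
          rw [h6, heapp' u]
          abel
      _ = clm ((M + Δ - Mhat)ᴴ) (u - rk1 uh uh u) - (clm Δᴴ u - rk1 vh vh (clm Δᴴ u)) := by
          rw [h1]
  -- norm inequalities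
  have hproj1 : ‖clm Δ v - rk1 uh uh (clm Δ v)‖ ≤ ‖clm Δ v‖ := by
    rw [← projCLM_span_unit uh huh, ← projCLM_orthogonal_apply]
    exact norm_projCLM_apply_le _ _
  have hproj2 : ‖clm Δᴴ u - rk1 vh vh (clm Δᴴ u)‖ ≤ ‖clm Δᴴ u‖ := by
    rw [← projCLM_span_unit vh hvh, ← projCLM_orthogonal_apply]
    exact norm_projCLM_apply_le _ _
  have hineq1 : c * ‖u - rk1 uh uh u‖ ≤ ee * ‖v - rk1 vh vh v‖ + NN := by
    have hL : ‖(c : ℂ) • (u - rk1 uh uh u)‖ = c * ‖u - rk1 uh uh u‖ := by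
      rw [norm_smul, Complex.norm_real, Real.norm_eq_abs, abs_of_pos hc]
    calc c * ‖u - rk1 uh uh u‖
        = ‖clm (M + Δ - Mhat) (v - rk1 vh vh v) - (clm Δ v - rk1 uh uh (clm Δ v))‖ := by
          rw [← hL, hid1]
      _ ≤ ‖clm (M + Δ - Mhat) (v - rk1 vh vh v)‖ + ‖clm Δ v - rk1 uh uh (clm Δ v)‖ :=
          norm_sub_le _ _
      _ ≤ ‖clm (M + Δ - Mhat)‖ * ‖v - rk1 vh vh v‖ + ‖clm Δ v‖ :=
          add_le_add ((clm (M + Δ - Mhat)).le_opNorm _) hproj1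
      _ ≤ ee * ‖v - rk1 vh vh v‖ + NN := by
          rw [heenorm]
          exact add_le_add le_rfl hN2
  have hineq2 : c * ‖v - rk1 vh vh v‖ ≤ ee * ‖u - rk1 uh uh u‖ + NN := by
    have hL : ‖(c : ℂ) • (v - rk1 vh vh v)‖ = c * ‖v - rk1 vh vh v‖ := by
      rw [norm_smul, Complex.norm_real, Real.norm_eq_abs, abs_of_pos hc]
    calc c * ‖v - rk1 vh vh v‖
        = ‖clm ((M + Δ - Mhat)ᴴ) (u - rk1 uh uh u) - (clm Δᴴ u - rk1 vh vh (clm Δᴴ u))‖ := by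
          rw [← hL, hid2]
      _ ≤ ‖clm ((M + Δ - Mhat)ᴴ) (u - rk1 uh uh u)‖ + ‖clm Δᴴ u - rk1 vh vh (clm Δᴴ u)‖ :=
          norm_sub_le _ _
      _ ≤ ‖clm ((M + Δ - Mhat)ᴴ)‖ * ‖u - rk1 uh uh u‖ + ‖clm Δᴴ u‖ :=
          add_le_add ((clm ((M + Δ - Mhat)ᴴ)).le_opNorm _) hproj2
      _ ≤ ee * ‖u - rk1 uh uh u‖ + NN := by
          rw [heenorm']
          exact add_le_add le_rfl hN1
  -- final assembly
  rw [hranM, hranMH, hranMhat, hranMhatH, sinTheta_span_le u uh hu huh,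
    sinTheta_span_le v vh hv hvh, hσ]
  have hden' : 0 < c - ee := by
    rw [← hσ]
    exact hden
  rw [le_div_iff₀ hden', ← rk1_apply uh uh u, ← rk1_apply vh vh v]
  exact final_arith hineq1 hineq2 hee0 (norm_nonneg _) (norm_nonneg _)
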